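/- Let A be a C*-algebra and let a, b be positive elements of A with ‖a − b‖ < ε for some ε > 0. Then (a − ε)₊ is Cuntz subequivalent to b, i.e., there is a sequence (vₙ) in A with ‖vₙ b vₙ* − (a − ε)₊‖ → 0. -/

import Mathlib

open Filter

/-- Cuntz subequivalence: `a ≾ b` iff there is a sequence `vₙ` with
`‖vₙ * b * vₙ* - a‖ → 0`. -/
def CuntzLE {A : Type*} [NonUnitalCStarAlgebra A] (a b : A) : Prop :=
  ∃ v : ℕ → A, Tendsto (fun n => ‖v n * b * star (v n) - a‖) atTop (nhds 0)

open Unitization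

lemma gtg_eq (δ t : ℝ) (hδ : 0 < δ) (ht : 0 ≤ t) :
    Real.sqrt t / (t + δ) * t * (Real.sqrt t / (t + δ)) = t ^ 2 / (t + δ) ^ 2 := by
  have hne : t + δ ≠ 0 := by positivity
  have hss : Real.sqrt t * Real.sqrt t = t := Real.mul_self_sqrt ht
  field_simp
  linear_combination t * hss

lemma gtg_le_one (δ t : ℝ) (hδ : 0 < δ) (ht : 0 ≤ t) :
    t ^ 2 / (t + δ) ^ 2 ≤ 1 := by
  rw [div_le_one (by positivity)]
  nlinarith

lemma t_h_le (δ t : ℝ) (hδ : 0 < δ) (ht : 0 ≤ t) :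
    t * (1 - t ^ 2 / (t + δ) ^ 2) ≤ 2 * δ := by
  have hpos : (0:ℝ) < (t + δ) ^ 2 := by positivity
  rw [one_sub_div (by positivity), ← mul_div_assoc, div_le_iff₀ hpos]
  nlinarith [mul_nonneg ht (mul_pos hδ hδ).le, pow_pos hδ 3, mul_pos (mul_pos hδ hδ) hδ]

lemma g_contOn (δ : ℝ) (hδ : 0 < δ) :
    ContinuousOn (fun t : ℝ => Real.sqrt t / (t + δ)) {t : ℝ | 0 ≤ t} := by
  apply Real.continuous_sqrt.continuousOn.div (by fun_prop)
  intro t ht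
  have : (0:ℝ) ≤ t := ht
  positivity

lemma cuntzLE_of_le {A : Type*} [NonUnitalCStarAlgebra A] [PartialOrder A] [StarOrderedRing A]
    {x y : A} (hx : 0 ≤ x) (hxy : x ≤ y) : CuntzLE x y := by
  have hy : 0 ≤ y := hx.trans hxy
  have hysa : IsSelfAdjoint y := .of_nonneg hy
  set s : A := CFC.sqrt x with hs
  have hssa : IsSelfAdjoint s := .of_nonneg (CFC.sqrt_nonneg x)
  set g : ℕ → ℝ → ℝ := fun n t => Real.sqrt t / (t + ((n : ℝ) + 1)⁻¹) with hg
  refine ⟨fun n => s * cfcₙ (g n) y, ?_⟩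
  have key : ∀ n : ℕ, ‖(s * cfcₙ (g n) y) * y * star (s * cfcₙ (g n) y) - x‖
      ≤ 2 * ((n : ℝ) + 1)⁻¹ := by
    intro n
    set δ : ℝ := ((n : ℝ) + 1)⁻¹ with hδdef
    have hδ : 0 < δ := by positivity
    have hg0 : g n 0 = 0 := by simp [hg]
    -- unitization objects
    set B := Unitization ℂ A
    set Y : B := (y : B) with hY
    set S : B := (s : B) with hS
    set X : B := (x : B) with hX
    have hY0 : 0 ≤ Y := inr_nonneg_iff.2 hy
    have hX0 : 0 ≤ X := inr_nonneg_iff.2 hx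
    have hXY : X ≤ Y := (inr_le_iff x y (.of_nonneg hx) hysa).2 hxy
    have hYsa : IsSelfAdjoint Y := .of_nonneg hY0
    have hSsa : IsSelfAdjoint S := hssa.inr ℂ
    have hspec : spectrum ℝ Y ⊆ {t : ℝ | 0 ≤ t} := fun t ht =>
      spectrum_nonneg_of_nonneg hY0 ht
    have hgY : ContinuousOn (g n) (spectrum ℝ Y) := (g_contOn δ hδ).mono hspec
    have hgcfc : IsSelfAdjoint (cfcₙ (g n) y) := cfcₙ_predicate _ _
    have hstar : star (s * cfcₙ (g n) y) = cfcₙ (g n) y * s := by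
      rw [star_mul, hgcfc.star_eq, hssa.star_eq]
    set G : B := cfc (g n) Y with hG
    have hGcoe : ((cfcₙ (g n) y : A) : B) = G :=
      Unitization.real_cfcₙ_eq_cfc_inr y (g n) hg0
    have hXSS : X = S * S := by
      rw [hX, hS, ← Unitization.inr_mul, hs, CFC.sqrt_mul_sqrt_self x hx]
    -- push coercion
    have hcoe : (((s * cfcₙ (g n) y) * y * (cfcₙ (g n) y * s) - x : A) : B)
        = S * G * Y * (G * S) - X := by
      push_cast [Unitization.inr_mul, Unitization.inr_sub, hGcoe]
      rfl
    -- combine cfc's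
    have hMY : G * Y * G = cfc (fun t => g n t * t * g n t) Y := by
      conv_lhs => rw [← cfc_id ℝ Y hYsa]
      rw [← cfc_mul _ _ Y hgY continuousOn_id, ← cfc_mul (fun x => g n x * id x) _ Y (hgY.mul continuousOn_id) hgY]
      rfl
    have hhcont : ContinuousOn (fun t => 1 - g n t * t * g n t) (spectrum ℝ Y) :=
      continuousOn_const.sub ((hgY.mul continuousOn_id).mul hgY)
    have hh0 : ∀ t ∈ spectrum ℝ Y, 0 ≤ 1 - g n t * t * g n t := by
      intro t ht
      have ht0 : 0 ≤ t := hspec ht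
      rw [hg]
      simp only
      rw [gtg_eq δ t hδ ht0]
      linarith [gtg_le_one δ t hδ ht0]
    set C : B := cfc (fun t => 1 - g n t * t * g n t) Y with hC
    have hC0 : 0 ≤ C := cfc_nonneg hh0
    have hMcont : ContinuousOn (fun t => g n t * t * g n t) (spectrum ℝ Y) := by
      exact (hgY.mul continuousOn_id).mul hgY
    have hsqrt_cont : ContinuousOn (fun t => Real.sqrt (1 - g n t * t * g n t))
        (spectrum ℝ Y) := Real.continuous_sqrt.comp_continuousOn hhcont
    have hCeq : C = 1 - cfc (fun t => g n t * t * g n t) Y := by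
      rw [hC, cfc_sub (fun _ => (1:ℝ)) (fun t => g n t * t * g n t) Y continuousOn_const hMcont,
        cfc_const_one ℝ Y hYsa]
    set T : B := cfc (fun t => Real.sqrt (1 - g n t * t * g n t)) Y with hT
    have hTsa : IsSelfAdjoint T := cfc_predicate _ _
    have hTT : T * T = C := by
      rw [hT, hC, ← cfc_mul (fun t => Real.sqrt (1 - g n t * t * g n t))
        (fun t => Real.sqrt (1 - g n t * t * g n t)) Y hsqrt_cont hsqrt_cont]
      exact cfc_congr fun t ht => Real.mul_self_sqrt (hh0 t ht)
    -- identity : v y v* - x  = S*M*S - X and X - S M S = S C S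
    have hid : S * G * Y * (G * S) - X = -(S * C * S) := by
      have h' : S * G * Y * (G * S) = S * (G * Y * G) * S := by noncomm_ring
      rw [h', hMY, hCeq, hXSS]
      simp only [mul_sub, sub_mul, mul_one, neg_sub]
    -- norm computation
    have hnorm1 : ‖S * C * S‖ = ‖T * S‖ * ‖T * S‖ := by
      have e1 : S * C * S = star (T * S) * (T * S) := by
        rw [star_mul, hTsa.star_eq, hSsa.star_eq, ← hTT]
        noncomm_ring
      rw [e1, CStarRing.norm_star_mul_self]
    have hnorm2 : ‖T * S‖ * ‖T * S‖ = ‖T * X * T‖ := by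
      rw [← CStarRing.norm_self_mul_star (x := T * S), star_mul, hTsa.star_eq, hSsa.star_eq,
        hXSS]
      congr 1
      noncomm_ring
    have hle1 : ‖T * X * T‖ ≤ ‖T * Y * T‖ := by
      have h1 : T * X * T ≤ T * Y * T := by
        have := star_left_conjugate_le_conjugate hXY T
        rwa [hTsa.star_eq] at this
      have h2 : 0 ≤ T * X * T := by
        have := star_left_conjugate_nonneg hX0 T
        rwa [hTsa.star_eq] at this
      exact CStarAlgebra.norm_le_norm_of_nonneg_of_le h2 h1
    have hTYT : T * Y * T = cfc (fun t => t * (1 - g n t * t * g n t)) Y := by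
      conv_lhs => rw [← cfc_id' ℝ Y hYsa]
      rw [hT, ← cfc_mul (fun t => Real.sqrt (1 - g n t * t * g n t)) (fun t : ℝ => t) Y
          hsqrt_cont (by exact continuousOn_id),
        ← cfc_mul (fun t => Real.sqrt (1 - g n t * t * g n t) * t)
          (fun t => Real.sqrt (1 - g n t * t * g n t)) Y
          (by exact hsqrt_cont.mul continuousOn_id) hsqrt_cont]
      refine cfc_congr fun t ht => ?_
      rw [mul_right_comm, Real.mul_self_sqrt (hh0 t ht), mul_comm]
    have hle2 : ‖T * Y * T‖ ≤ 2 * δ := by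
      rw [hTYT]
      refine norm_cfc_le (by positivity) fun t ht => ?_
      have ht0 : 0 ≤ t := hspec ht
      rw [Real.norm_eq_abs, abs_of_nonneg (mul_nonneg ht0 (hh0 t ht))]
      rw [hg]
      simp only
      rw [gtg_eq δ t hδ ht0]
      exact t_h_le δ t hδ ht0
    calc ‖(s * cfcₙ (g n) y) * y * star (s * cfcₙ (g n) y) - x‖
        = ‖S * G * Y * (G * S) - X‖ := by
          rw [hstar, ← hcoe, Unitization.norm_inr]
      _ = ‖S * C * S‖ := by rw [hid, norm_neg]
      _ ≤ 2 * δ := by rw [hnorm1, hnorm2]; exact hle1.trans hle2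
  have hb : Tendsto (fun n : ℕ => 2 * ((n : ℝ) + 1)⁻¹) atTop (nhds 0) := by
    have := tendsto_one_div_add_atTop_nhds_zero_nat (𝕜 := ℝ)
    simpa [one_div] using this.const_mul 2
  exact squeeze_zero (fun n => norm_nonneg _) key hb

lemma f_contOn (ε : ℝ) (hε : 0 < ε) :
    ContinuousOn (fun t : ℝ => Real.sqrt (max 0 (t - ε) / t)) {t : ℝ | 0 ≤ t} := by
  intro t ht
  rcases lt_or_ge t ε with hlt | hle
  · have hev : (fun u : ℝ => Real.sqrt (max 0 (u - ε) / u)) =ᶠ[nhds t] fun _ => (0:ℝ) := by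
      filter_upwards [Iio_mem_nhds hlt] with u hu
      have h0 : max 0 (u - ε) = 0 := max_eq_left (by simp only [Set.mem_Iio] at hu; linarith)
      simp [h0]
    exact (continuousAt_const.congr hev.symm).continuousWithinAt
  · have ht0 : (0:ℝ) < t := lt_of_lt_of_le hε hle
    apply ContinuousAt.continuousWithinAt
    exact Real.continuous_sqrt.continuousAt.comp <|
      ((continuous_const.max (continuous_id.sub continuous_const)).continuousAt).div
        continuousAt_id ht0.ne'

lemma pointwise_key (ε r t : ℝ) (hε : 0 < ε) (hr : 0 ≤ r) (hrε : r < ε) (ht : 0 ≤ t) :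
    (1 - r / ε) * max 0 (t - ε) ≤
      Real.sqrt (max 0 (t - ε) / t) * t * Real.sqrt (max 0 (t - ε) / t)
        - r * (Real.sqrt (max 0 (t - ε) / t) * Real.sqrt (max 0 (t - ε) / t)) := by
  have hu : 0 ≤ max 0 (t - ε) / t := div_nonneg (le_max_left _ _) ht
  rw [mul_right_comm, Real.mul_self_sqrt hu]
  rcases le_or_gt t ε with hte | hte
  · have hm : max 0 (t - ε) = 0 := max_eq_left (by linarith)
    simp [hm]
  · have hm : max 0 (t - ε) = t - ε := max_eq_right (by linarith)
    have ht0 : (0:ℝ) < t := lt_trans hε hte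
    rw [hm, div_mul_cancel₀ _ ht0.ne']
    have h1 : r * (t - ε) / t ≤ r * (t - ε) / ε := by
      gcongr
    have h2 : r * ((t - ε) / t) = r * (t - ε) / t := by ring
    have h3 : r / ε * (t - ε) = r * (t - ε) / ε := by ring
    nlinarith [h1]

/-- If `a, b ≥ 0` in a C*-algebra and `‖a - b‖ < ε`, then
`(a - ε)₊ ≾ b`, where `(a - ε)₊` is the functional calculus of `t ↦ max 0 (t - ε)`. -/
theorem cutoff_cuntzLE_of_norm_lt {A : Type*} [NonUnitalCStarAlgebra A]
    [PartialOrder A] [StarOrderedRing A]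
    (a b : A) (ha : 0 ≤ a) (hb : 0 ≤ b) (ε : ℝ) (hε : 0 < ε)
    (h : ‖a - b‖ < ε) :
    CuntzLE (cfcₙ (fun t : ℝ => max 0 (t - ε)) a) b := by
  set r : ℝ := ‖a - b‖ with hrdef
  have hr0 : 0 ≤ r := norm_nonneg _
  set lam : ℝ := 1 - r / ε with hlamdef
  have hlam0 : 0 < lam := by
    have : r / ε < 1 := (div_lt_one hε).2 h
    simp only [hlamdef]; linarith
  set f : ℝ → ℝ := fun t => Real.sqrt (max 0 (t - ε) / t) with hfdef
  have hf0 : f 0 = 0 := by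
    simp only [hfdef, zero_sub, max_eq_left (neg_nonpos_of_nonneg hε.le), zero_div,
      Real.sqrt_zero]
  have hspec : quasispectrum ℝ a ⊆ {t : ℝ | 0 ≤ t} := fun t ht =>
    quasispectrum_nonneg_of_nonneg a ha t ht
  have hfa : ContinuousOn f (quasispectrum ℝ a) := (f_contOn ε hε).mono hspec
  set c : A := cfcₙ f a with hcdef
  have hcsa : IsSelfAdjoint c := cfcₙ_predicate _ _
  set m : ℝ → ℝ := fun t => max 0 (t - ε) with hmdef
  have hm0 : m 0 = 0 := by
    simp only [hmdef, zero_sub, max_eq_left (neg_nonpos_of_nonneg hε.le)]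
  have hmcont : ContinuousOn m (quasispectrum ℝ a) :=
    (continuous_const.max (continuous_id.sub continuous_const)).continuousOn
  set p : A := cfcₙ (fun t => lam * m t) a with hpdef
  have hlamm_cont : ContinuousOn (fun t => lam * m t) (quasispectrum ℝ a) :=
    continuousOn_const.mul hmcont
  have hp0 : 0 ≤ p := cfcₙ_nonneg fun t _ =>
    mul_nonneg hlam0.le (le_max_left _ _)
  -- the key inequality p ≤ c * b * c
  have hkey : p ≤ c * b * c := by
    have h1 : c * (a - b) * c ≤ r • (c * c) := by
      have := CStarAlgebra.star_left_conjugate_le_norm_smul (a := c) (b := a - b)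
        (ha.isSelfAdjoint.sub hb.isSelfAdjoint)
      rwa [hcsa.star_eq, ← hrdef] at this
    have h2 : c * a * c - r • (c * c) ≤ c * b * c := by
      have h3 : c * (a - b) * c = c * a * c - c * b * c := by noncomm_ring
      rw [h3] at h1
      exact sub_le_comm.mp h1
    refine le_trans ?_ h2
    have hcac : c * a * c = cfcₙ (fun t => f t * t * f t) a := by
      conv_lhs => rw [← cfcₙ_id' ℝ a ha.isSelfAdjoint]
      rw [hcdef, ← cfcₙ_mul (f := f) (g := fun t : ℝ => t) (a := a) hfa hf0
          (by exact continuousOn_id) rfl,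
        ← cfcₙ_mul (f := fun t => f t * t) (g := f) (a := a)
          (by exact hfa.mul continuousOn_id) (by show f 0 * 0 = 0; rw [mul_zero]) hfa hf0]
    have hcc : c * c = cfcₙ (fun t => f t * f t) a := by
      rw [hcdef, ← cfcₙ_mul (f := f) (g := f) (a := a) hfa hf0 hfa hf0]
    have hsmul : r • (c * c) = cfcₙ (fun t => r * (f t * f t)) a := by
      rw [hcc, ← cfcₙ_const_mul r (fun t => f t * f t) a (hfa.mul hfa)
        (by show f 0 * f 0 = 0; rw [hf0, mul_zero])]
    rw [hcac, hsmul, hpdef,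
      ← cfcₙ_sub (f := fun t => f t * t * f t) (g := fun t => r * (f t * f t)) (a := a)
        ((hfa.mul continuousOn_id).mul hfa) (by show f 0 * 0 * f 0 = 0; rw [mul_zero, zero_mul])
        (continuousOn_const.mul (hfa.mul hfa))
        (by show r * (f 0 * f 0) = 0; rw [hf0, mul_zero, mul_zero])]
    refine cfcₙ_mono fun t ht => ?_
    have ht0 : 0 ≤ t := hspec ht
    exact pointwise_key ε r t hε hr0 h ht0
  obtain ⟨v, hv⟩ := cuntzLE_of_le hp0 hkey
  refine ⟨fun n => Real.sqrt lam⁻¹ • (v n * c), ?_⟩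
  have haeq : cfcₙ m a = lam⁻¹ • p := by
    rw [hpdef, ← cfcₙ_const_mul lam⁻¹ (fun t => lam * m t) a hlamm_cont
      (by show lam * m 0 = 0; rw [hm0, mul_zero])]
    refine cfcₙ_congr fun t _ => ?_
    show m t = lam⁻¹ * (lam * m t)
    rw [← mul_assoc, inv_mul_cancel₀ hlam0.ne', one_mul]
  have heq : ∀ n, ‖(Real.sqrt lam⁻¹ • (v n * c)) * b * star (Real.sqrt lam⁻¹ • (v n * c))
      - cfcₙ m a‖ = lam⁻¹ * ‖v n * (c * b * c) * star (v n) - p‖ := by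
    intro n
    have hstarw : star (Real.sqrt lam⁻¹ • (v n * c)) = Real.sqrt lam⁻¹ • (c * star (v n)) := by
      rw [star_smul, star_trivial, star_mul, hcsa.star_eq]
    rw [hstarw]
    have hmuls : (Real.sqrt lam⁻¹ • (v n * c)) * b * (Real.sqrt lam⁻¹ • (c * star (v n)))
        = lam⁻¹ • (v n * (c * b * c) * star (v n)) := by
      rw [smul_mul_assoc, smul_mul_assoc, mul_smul_comm, smul_smul,
        Real.mul_self_sqrt (inv_nonneg.2 hlam0.le)]
      congr 1
      noncomm_ring
    rw [hmuls, haeq, ← smul_sub, norm_smul, Real.norm_eq_abs,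
      abs_of_nonneg (inv_nonneg.2 hlam0.le)]
  have hfinal := hv.const_mul lam⁻¹
  rw [mul_zero] at hfinal
  exact Tendsto.congr (fun n => (heq n).symm) hfinal
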